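/- Let 𝔆 = ℂ·1 + span{E₁₂, E₁₃, E₂₃} ⊆ M₃(ℂ) and define δ : 𝔆 → 𝔆 by δ(λ·1 + x₁₂E₁₂ + x₁₃E₁₃ + x₂₃E₂₃) = (2x₁₃ − x₁₂ + x₂₃)·E₁₃. Then δ is a local derivation which is not a derivation: for every X ∈ 𝔆 there exists a derivation d of 𝔆 with δ(X) = d(X), yet there exist X, Y ∈ 𝔆 with δ(XY) ≠ δ(X)Y + Xδ(Y). -/

import Mathlib

/-- Standard matrix units in `M₃(ℂ)`. -/
def E₁₂ : Matrix (Fin 3) (Fin 3) ℂ := Matrix.single 0 1 1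
def E₁₃ : Matrix (Fin 3) (Fin 3) ℂ := Matrix.single 0 2 1
def E₂₃ : Matrix (Fin 3) (Fin 3) ℂ := Matrix.single 1 2 1

/-- The set `𝔆 = ℂ·1 + span{E₁₂, E₁₃, E₂₃} ⊆ M₃(ℂ)`. -/
def frakC : Set (Matrix (Fin 3) (Fin 3) ℂ) :=
  {M | ∃ l a b c : ℂ, M = l • 1 + a • E₁₂ + b • E₁₃ + c • E₂₃}

noncomputable def D (α₁ α₂ β₂ : ℂ) :
    Matrix (Fin 3) (Fin 3) ℂ →ₗ[ℂ] Matrix (Fin 3) (Fin 3) ℂ where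
  toFun M := (α₁ * M 0 1) • E₁₂ + (α₂ * M 0 1 + α₁ * M 0 2 + β₂ * M 1 2) • E₁₃
  map_add' M N := by
    simp only [Matrix.add_apply, mul_add, add_smul]
    abel
  map_smul' r M := by
    simp only [Matrix.smul_apply, smul_eq_mul, RingHom.id_apply, smul_add, smul_smul]
    ring_nf

lemma mul_formula (l a b c l' a' b' c' : ℂ) :
    (l • (1 : Matrix (Fin 3) (Fin 3) ℂ) + a • E₁₂ + b • E₁₃ + c • E₂₃) *
        (l' • 1 + a' • E₁₂ + b' • E₁₃ + c' • E₂₃) =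
      (l * l') • 1 + (l * a' + a * l') • E₁₂ + (l * b' + a * c' + b * l') • E₁₃ +
        (l * c' + c * l') • E₂₃ := by
  ext i j
  fin_cases i <;> fin_cases j <;>
    simp [E₁₂, E₁₃, E₂₃, Matrix.mul_apply, Fin.sum_univ_three, Matrix.single,
      Matrix.one_apply] <;> ring

lemma entry01 (l a b c : ℂ) :
    (l • (1 : Matrix (Fin 3) (Fin 3) ℂ) + a • E₁₂ + b • E₁₃ + c • E₂₃) 0 1 = a := by
  simp [E₁₂, E₁₃, E₂₃, Matrix.single, Matrix.one_apply]

lemma entry02 (l a b c : ℂ) :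
    (l • (1 : Matrix (Fin 3) (Fin 3) ℂ) + a • E₁₂ + b • E₁₃ + c • E₂₃) 0 2 = b := by
  simp [E₁₂, E₁₃, E₂₃, Matrix.single, Matrix.one_apply]

lemma entry12 (l a b c : ℂ) :
    (l • (1 : Matrix (Fin 3) (Fin 3) ℂ) + a • E₁₂ + b • E₁₃ + c • E₂₃) 1 2 = c := by
  simp [E₁₂, E₁₃, E₂₃, Matrix.single, Matrix.one_apply]

lemma D_apply_mem (α₁ α₂ β₂ l a b c : ℂ) :
    D α₁ α₂ β₂ (l • 1 + a • E₁₂ + b • E₁₃ + c • E₂₃) =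
      (α₁ * a) • E₁₂ + (α₂ * a + α₁ * b + β₂ * c) • E₁₃ := by
  simp [D, E₁₂, E₁₃, E₂₃, Matrix.single]

lemma D_mapsTo (α₁ α₂ β₂ : ℂ) : Set.MapsTo (D α₁ α₂ β₂) frakC frakC := by
  rintro X ⟨l, a, b, c, rfl⟩
  exact ⟨0, α₁ * a, α₂ * a + α₁ * b + β₂ * c, 0, by
    rw [D_apply_mem]; simp⟩

lemma D_deriv (α₁ α₂ β₂ : ℂ) :
    ∀ X ∈ frakC, ∀ Y ∈ frakC,
      D α₁ α₂ β₂ (X * Y) = D α₁ α₂ β₂ X * Y + X * D α₁ α₂ β₂ Y := by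
  rintro X ⟨l, a, b, c, rfl⟩ Y ⟨l', a', b', c', rfl⟩
  rw [mul_formula, D_apply_mem, D_apply_mem, D_apply_mem]
  ext i j
  fin_cases i <;> fin_cases j <;>
    simp [E₁₂, E₁₃, E₂₃, Matrix.mul_apply, Fin.sum_univ_three, Matrix.single,
      Matrix.one_apply] <;> ring

/-- Crist's example: the map
`δ(λ·1 + x₁₂E₁₂ + x₁₃E₁₃ + x₂₃E₂₃) = (2x₁₃ − x₁₂ + x₂₃)·E₁₃` on `𝔆` is a local
derivation which is not a derivation.  (Elements of `𝔆` and products of such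
elements are written in their unique coordinates with respect to
`1, E₁₂, E₁₃, E₂₃`.) -/
theorem crist_local_derivation_not_derivation :
    -- δ is a local derivation
    (∀ l a b c : ℂ,
      ∃ d : Matrix (Fin 3) (Fin 3) ℂ →ₗ[ℂ] Matrix (Fin 3) (Fin 3) ℂ,
        Set.MapsTo d frakC frakC ∧
        (∀ X ∈ frakC, ∀ Y ∈ frakC, d (X * Y) = d X * Y + X * d Y) ∧
        d (l • 1 + a • E₁₂ + b • E₁₃ + c • E₂₃) = (2 * b - a + c) • E₁₃) ∧
    -- δ is not a derivation
    (∃ l a b c l' a' b' c' L A B C : ℂ,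
      (l • (1 : Matrix (Fin 3) (Fin 3) ℂ) + a • E₁₂ + b • E₁₃ + c • E₂₃) *
          (l' • 1 + a' • E₁₂ + b' • E₁₃ + c' • E₂₃) =
        L • 1 + A • E₁₂ + B • E₁₃ + C • E₂₃ ∧
      (2 * B - A + C) • E₁₃ ≠
        ((2 * b - a + c) • E₁₃) * (l' • 1 + a' • E₁₂ + b' • E₁₃ + c' • E₂₃) +
          (l • 1 + a • E₁₂ + b • E₁₃ + c • E₂₃) * ((2 * b' - a' + c') • E₁₃)) := by
  constructor
  · intro l a b c
    rcases eq_or_ne a 0 with ha | ha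
    · refine ⟨D 2 0 1, D_mapsTo _ _ _, D_deriv _ _ _, ?_⟩
      rw [D_apply_mem]; subst ha; ring_nf; simp
    · refine ⟨D 0 ((2*b - a)/a) 1, D_mapsTo _ _ _, D_deriv _ _ _, ?_⟩
      rw [D_apply_mem]
      rw [div_mul_cancel₀ _ ha]
      ring_nf
      simp
  · refine ⟨0, 1, 0, 0, 0, 0, 0, 1, 0, 0, 1, 0, ?_, ?_⟩
    · rw [mul_formula]; norm_num
    · intro h
      have := congrFun (congrFun h 0) 2
      simp [E₁₂, E₁₃, E₂₃, Matrix.mul_apply, Fin.sum_univ_three, Matrix.single,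
        Matrix.one_apply] at this
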